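/- If G is an outerplanar graph with diameter d and a resolving set of size k, then G has order at most 2kd² − 2d² + d + 1. -/

import Mathlib

namespace OuterRes
open List SimpleGraph Walk

/-- number of strict changes between consecutive entries -/
def changes : List ℕ → ℕ
  | a :: b :: t => (if a = b then 0 else 1) + changes (b :: t)
  | _ => 0

def lastv : List ℕ → ℕ
  | [] => 0
  | [a] => a
  | _ :: b :: t => lastv (b :: t)

def headv : List ℕ → ℕ
  | [] => 0
  | a :: _ => a

def junc (u v : List ℕ) : ℕ :=
  if u = [] ∨ v = [] then 0 else if lastv u = headv v then 0 else 1

def Concave (l : List ℕ) : Prop := ∀ a b c : ℕ, [a, b, c] <+ l → min a c ≤ b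

lemma changes_cons_le (a : ℕ) (t : List ℕ) : changes t ≤ changes (a :: t) := by
  cases t with
  | nil => simp [changes]
  | cons b t => simp [changes]

lemma lastv_cons_cons (a b : ℕ) (t : List ℕ) : lastv (a :: b :: t) = lastv (b :: t) := rfl

lemma changes_append : ∀ u v : List ℕ, changes (u ++ v) = changes u + junc u v + changes v
  | [], v => by simp [changes, junc]
  | [a], v => by
      cases v with
      | nil => simp [changes, junc]
      | cons b t =>
          simp only [List.singleton_append, changes, junc, lastv, headv]
          simp only [List.cons_ne_nil, false_or, if_false]
          by_cases h : a = b <;> simp [h]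
  | a :: b :: u, v => by
      have ih := changes_append (b :: u) v
      have h1 : (a :: b :: u) ++ v = a :: b :: (u ++ v) := rfl
      have h2 : junc (a :: b :: u) v = junc (b :: u) v := by
        simp [junc, lastv_cons_cons]; rfl
      rw [h1]
      show (if a = b then 0 else 1) + changes (b :: (u ++ v)) = _
      rw [show (b :: (u ++ v)) = (b :: u) ++ v from rfl, ih, h2]
      show _ = (if a = b then 0 else 1) + changes (b :: u) + junc (b :: u) v + changes v
      omega

lemma concave_sublist {l' l : List ℕ} (hs : l' <+ l) (h : Concave l) : Concave l' :=
  fun a b c hsub => h a b c (hsub.trans hs)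

lemma chain_changes : ∀ (a : ℕ) (t : List ℕ), List.Chain' (fun x y => y ≤ x) (a :: t) →
    changes (a :: t) + lastv (a :: t) ≤ a
  | a, [], _ => by simp [changes, lastv]
  | a, b :: t, h => by
      have hch := List.isChain_cons_cons.mp h
      have ih := chain_changes b t hch.2
      have hba : b ≤ a := hch.1
      show (if a = b then 0 else 1) + changes (b :: t) + lastv (b :: t) ≤ a
      split <;> omega

lemma conc_chain : ∀ (a b : ℕ) (t : List ℕ), Concave (a :: b :: t) → b < a →
    List.Chain' (fun x y => y ≤ x) (b :: t)
  | a, b, [], _, _ => by exact List.isChain_singleton b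
  | a, b, c :: t, hc, hba => by
      have htriple : min a c ≤ b :=
        hc a b c (.cons₂ _ (.cons₂ _ (.cons₂ _ (List.nil_sublist t))))
      have hcb : c ≤ b := by
        rcases le_or_gt a c with h | h
        · omega
        · rcases min_le_iff.mp htriple with h' | h' <;> omega
      have hsub : (a :: c :: t) <+ (a :: b :: c :: t) :=
        .cons₂ _ ((c :: t).sublist_cons_self b)
      have := conc_chain a c t (concave_sublist hsub hc) (lt_of_le_of_lt hcb hba)
      exact List.isChain_cons_cons.mpr ⟨hcb, this⟩

lemma conc_bound : ∀ (d a : ℕ) (t : List ℕ), Concave (a :: t) → (∀ x ∈ a :: t, x ≤ d) →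
    changes (a :: t) + a + lastv (a :: t) ≤ 2 * d
  | d, a, [], _, hb => by
      have := hb a (by simp)
      simp [changes, lastv]; omega
  | d, a, b :: t, hc, hb => by
      rcases lt_trichotomy a b with h | h | h
      · have ih := conc_bound d b t (concave_sublist ((b :: t).sublist_cons_self a) hc)
          (fun x hx => hb x (List.mem_cons_of_mem _ hx))
        show (if a = b then 0 else 1) + changes (b :: t) + a + lastv (b :: t) ≤ 2 * d
        split <;> omega
      · subst h
        have ih := conc_bound d a t (concave_sublist ((a :: t).sublist_cons_self a) hc)
          (fun x hx => hb x (List.mem_cons_of_mem _ hx))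
        have h0 : (if a = a then 0 else 1) = 0 := by simp
        show (if a = a then 0 else 1) + changes (a :: t) + a + lastv (a :: t) ≤ 2 * d
        omega
      · have hchain := conc_chain a b t hc h
        have hN := chain_changes b t hchain
        have ha := hb a (by simp)
        show (if a = b then 0 else 1) + changes (b :: t) + a + lastv (b :: t) ≤ 2 * d
        split <;> omega

lemma changes_le_of_concave {d : ℕ} {l : List ℕ} (hc : Concave l) (hb : ∀ x ∈ l, x ≤ d) :
    changes l ≤ 2 * d := by
  cases l with
  | nil => simp [changes]
  | cons a t => have := conc_bound d a t hc hb; omega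

lemma lastv_append_of_ne_nil : ∀ (u v : List ℕ), v ≠ [] → lastv (u ++ v) = lastv v
  | [], v, _ => rfl
  | [a], v, h => by cases v with
      | nil => simp at h
      | cons b t => rfl
  | a :: b :: u, v, h => by
      show lastv (b :: (u ++ v)) = _
      rw [show b :: (u ++ v) = (b :: u) ++ v from rfl]
      exact lastv_append_of_ne_nil (b :: u) v h

lemma rot_bound {d : ℕ} (u v : List ℕ) (hc : Concave (v ++ u)) (hb : ∀ x ∈ u ++ v, x ≤ d) :
    changes (u ++ v) ≤ 2 * d := by
  have hb' : ∀ x ∈ v ++ u, x ≤ d := by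
    intro x hx; apply hb; simp only [List.mem_append] at hx ⊢; tauto
  rcases eq_or_ne u [] with rfl | hu
  · simp only [List.append_nil] at hc
    simp only [List.nil_append]
    exact changes_le_of_concave hc (by simpa using hb)
  rcases eq_or_ne v [] with rfl | hv
  · simp only [List.append_nil]
    simp only [List.nil_append] at hc
    exact changes_le_of_concave hc (by simpa using hb)
  obtain ⟨b, v', rfl⟩ : ∃ b v', v = b :: v' := by
    cases v with
    | nil => exact absurd rfl hv
    | cons b v' => exact ⟨b, v', rfl⟩
  have h1 := changes_append u (b :: v')
  have hcb := conc_bound d b (v' ++ u) (by rwa [List.cons_append] at hc)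
    (by intro x hx; apply hb'; rw [List.cons_append]; exact hx)
  have h2 : changes (b :: (v' ++ u)) = changes ((b :: v') ++ u) := rfl
  have h3 := changes_append (b :: v') u
  have h4 : lastv (b :: (v' ++ u)) = lastv u := by
    rw [show b :: (v' ++ u) = (b :: v') ++ u from rfl]
    exact lastv_append_of_ne_nil _ _ hu
  have h5 : junc u (b :: v') = if lastv u = b then 0 else 1 := by
    simp [junc, hu, headv]; rfl
  by_cases hlb : lastv u = b
  · rw [h5, if_pos hlb] at h1
    omega
  · rw [h5, if_neg hlb] at h1
    have : b + lastv u ≥ 1 := by omega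
    omega


section Graph
variable {V : Type*} {G : SimpleGraph V} {f : V → ℕ}

lemma edge_block (hinj : Function.Injective f)
    (hNC : ∀ a b c d : V, f a < f c → f c < f b → f b < f d → G.Adj a b → ¬ G.Adj c d)
    {e1 e2 : V} (h12 : G.Adj e1 e2) :
    ∀ {s t : V} (W : G.Walk s t), f e1 < f s → f s < f e2 →
      ¬(f e1 < f t ∧ f t < f e2) → e1 ∈ W.support ∨ e2 ∈ W.support := by
  intro s t W
  induction W with
  | nil =>
    intro h1 h2 ht
    exact absurd ⟨h1, h2⟩ ht
  | @cons s p t' hadj W ih =>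
    intro h1 h2 ht
    by_cases hp : f e1 < f p ∧ f p < f e2
    · rcases ih hp.1 hp.2 ht with h | h
      · left; exact List.mem_cons_of_mem _ h
      · right; exact List.mem_cons_of_mem _ h
    · rcases Nat.lt_trichotomy (f p) (f e1) with hlt | heq | hgt
      · exact absurd h12 (hNC p s e1 e2 hlt h1 h2 hadj.symm)
      · left
        have : p = e1 := hinj heq
        subst this
        exact List.mem_cons_of_mem _ W.start_mem_support
      · rcases Nat.lt_trichotomy (f p) (f e2) with hlt2 | heq2 | hgt2
        · exact absurd ⟨hgt, hlt2⟩ hp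
        · right
          have : p = e2 := hinj heq2
          subst this
          exact List.mem_cons_of_mem _ W.start_mem_support
        · exact absurd hadj (hNC e1 e2 s p h1 h2 hgt2 h12)

lemma walk_block (hinj : Function.Injective f)
    (hNC : ∀ a b c d : V, f a < f c → f c < f b → f b < f d → G.Adj a b → ¬ G.Adj c d)
    {a b : V} (W1 : G.Walk a b) (hab : f a < f b) :
    ∀ {s t : V} (W : G.Walk s t), f a < f s → f s < f b →
      ¬(f a < f t ∧ f t < f b) → ∃ z, z ∈ W.support ∧ z ∈ W1.support := by
  intro s t W
  induction W with
  | nil =>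
    intro h1 h2 ht
    exact absurd ⟨h1, h2⟩ ht
  | @cons s p t' hadj W ih =>
    intro h1 h2 ht
    by_cases hp : f a < f p ∧ f p < f b
    · obtain ⟨z, hz1, hz2⟩ := ih hp.1 hp.2 ht
      exact ⟨z, List.mem_cons_of_mem _ hz1, hz2⟩
    · rcases Nat.lt_trichotomy (f p) (f a) with hlt | heq | hgt
      · -- edge (p, s) spans a; W1 from a (inside) to b (outside, f b > f s)
        have hbs : f s < f b := h2
        have := edge_block hinj hNC hadj.symm W1 hlt h1
          (by intro hcon; exact absurd hcon.2 (by omega))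
        rcases this with h | h
        · exact ⟨p, List.mem_cons_of_mem _ W.start_mem_support, h⟩
        · exact ⟨s, List.mem_cons_self, h⟩
      · have : p = a := hinj heq
        subst this
        exact ⟨p, List.mem_cons_of_mem _ W.start_mem_support, W1.start_mem_support⟩
      · rcases Nat.lt_trichotomy (f p) (f b) with hlt2 | heq2 | hgt2
        · exact absurd ⟨hgt, hlt2⟩ hp
        · have : p = b := hinj heq2
          subst this
          exact ⟨p, List.mem_cons_of_mem _ W.start_mem_support, W1.end_mem_support⟩
        · -- edge (s, p) with f s < f p, spans b; use W1.reverse from b to a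
          have := edge_block hinj hNC hadj W1.reverse h2 hgt2
            (by intro hcon; exact absurd hcon.1 (by omega))
          rcases this with h | h
          · refine ⟨s, ?_, ?_⟩
            · exact List.mem_cons_self
            · rwa [Walk.support_reverse, List.mem_reverse] at h
          · refine ⟨p, List.mem_cons_of_mem _ W.start_mem_support, ?_⟩
            rwa [Walk.support_reverse, List.mem_reverse] at h

lemma cross_walks (hinj : Function.Injective f)
    (hNC : ∀ a b c d : V, f a < f c → f c < f b → f b < f d → G.Adj a b → ¬ G.Adj c d)
    {a b c d : V} (W1 : G.Walk a b) (W2 : G.Walk c d)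
    (h1 : f a < f c) (h2 : f c < f b) (h3 : f b < f d) :
    ∃ z, z ∈ W1.support ∧ z ∈ W2.support := by
  have hab : f a < f b := h1.trans h2
  obtain ⟨z, hz1, hz2⟩ := walk_block hinj hNC W1 hab W2 h1 h2
    (by intro hcon; omega)
  exact ⟨z, hz2, hz1⟩

lemma key_ineq [DecidableEq V] (hcon : G.Connected) {x1 u v y z : V} {i : ℕ}
    (hv : G.dist x1 v = i)
    (P : G.Walk x1 u) (hP : P.length = i)
    (Q : G.Walk y v) (hQ : Q.length = G.dist y v)
    (hzP : z ∈ P.support) (hzQ : z ∈ Q.support) :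
    G.dist y u ≤ G.dist y v := by
  have hsplitP : (P.takeUntil z hzP).length + (P.dropUntil z hzP).length = i := by
    rw [← Walk.length_append, Walk.take_spec P hzP, hP]
  have hsplitQ : (Q.takeUntil z hzQ).length + (Q.dropUntil z hzQ).length = G.dist y v := by
    rw [← Walk.length_append, Walk.take_spec Q hzQ, hQ]
  have h1 : G.dist x1 z ≤ (P.takeUntil z hzP).length := SimpleGraph.dist_le _
  have h2 : G.dist z u ≤ (P.dropUntil z hzP).length := SimpleGraph.dist_le _
  have h3 : G.dist y z ≤ (Q.takeUntil z hzQ).length := SimpleGraph.dist_le _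
  have h4 : G.dist z v ≤ (Q.dropUntil z hzQ).length := SimpleGraph.dist_le _
  have h5 : G.dist x1 v ≤ G.dist x1 z + G.dist z v := hcon.dist_triangle
  have h6 : G.dist y u ≤ G.dist y z + G.dist z u := hcon.dist_triangle
  omega

lemma claimC [DecidableEq V] (hinj : Function.Injective f)
    (hNC : ∀ a b c d : V, f a < f c → f c < f b → f b < f d → G.Adj a b → ¬ G.Adj c d)
    (hcon : G.Connected) {x1 y u v w : V} {i : ℕ}
    (hu : G.dist x1 u = i) (hv : G.dist x1 v = i) (hw : G.dist x1 w = i)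
    (hpat : (f y < f u ∧ f u < f v ∧ f v < f w) ∨
            (f u < f v ∧ f v < f w ∧ f w < f y) ∨
            (f v < f w ∧ f w < f y ∧ f y < f u) ∨
            (f w < f y ∧ f y < f u ∧ f u < f v)) :
    min (G.dist y u) (G.dist y w) ≤ G.dist y v := by
  obtain ⟨Pu, hPu⟩ := hcon.exists_walk_length_eq_dist x1 u
  obtain ⟨Pw, hPw⟩ := hcon.exists_walk_length_eq_dist x1 w
  obtain ⟨Q, hQ⟩ := hcon.exists_walk_length_eq_dist y v
  rw [hu] at hPu
  rw [hw] at hPw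
  have hQ' : Q.length = G.dist y v := hQ
  set B : G.Walk u w := Pu.reverse.append Pw with hB
  have hmemB : ∀ z, z ∈ B.support → z ∈ Pu.support ∨ z ∈ Pw.support := by
    intro z hz
    rw [hB, Walk.mem_support_append_iff] at hz
    rcases hz with hz | hz
    · left; rwa [Walk.support_reverse, List.mem_reverse] at hz
    · right; exact hz
  have finish : ∀ z, z ∈ B.support → z ∈ Q.support →
      min (G.dist y u) (G.dist y w) ≤ G.dist y v := by
    intro z hzB hzQ
    rcases hmemB z hzB with h | h
    · exact le_trans (min_le_left _ _) (key_ineq hcon hv Pu hPu Q hQ' h hzQ)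
    · exact le_trans (min_le_right _ _) (key_ineq hcon hv Pw hPw Q hQ' h hzQ)
  rcases hpat with ⟨p1, p2, p3⟩ | ⟨p1, p2, p3⟩ | ⟨p1, p2, p3⟩ | ⟨p1, p2, p3⟩
  · obtain ⟨z, hz1, hz2⟩ := cross_walks hinj hNC Q B p1 p2 p3
    exact finish z hz2 hz1
  · obtain ⟨z, hz1, hz2⟩ := cross_walks hinj hNC B Q.reverse p1 p2 p3
    rw [Walk.support_reverse, List.mem_reverse] at hz2
    exact finish z hz1 hz2
  · obtain ⟨z, hz1, hz2⟩ := cross_walks hinj hNC Q.reverse B.reverse p1 p2 p3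
    rw [Walk.support_reverse, List.mem_reverse] at hz1 hz2
    exact finish z hz2 hz1
  · obtain ⟨z, hz1, hz2⟩ := cross_walks hinj hNC B.reverse Q p1 p2 p3
    rw [Walk.support_reverse, List.mem_reverse] at hz1
    exact finish z hz1 hz2

lemma concave_rotated [DecidableEq V] (hinj : Function.Injective f)
    (hNC : ∀ a b c d : V, f a < f c → f c < f b → f b < f d → G.Adj a b → ¬ G.Adj c d)
    (hcon : G.Connected) {x1 y : V} {i : ℕ} {la lb : List V}
    (hla : ∀ z ∈ la, f z ≤ f y) (hlb : ∀ z ∈ lb, f y < f z)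
    (hpla : la.Pairwise (fun p q => f p < f q)) (hplb : lb.Pairwise (fun p q => f p < f q))
    (hdla : ∀ z ∈ la, G.dist x1 z = i) (hdlb : ∀ z ∈ lb, G.dist x1 z = i) :
    Concave ((lb ++ la).map (fun z => G.dist y z)) := by
  intro ga gb gc hsub
  obtain ⟨l'', hsub', heq⟩ := List.sublist_map_iff.mp hsub
  have hlen : l''.length = 3 := by
    have := congrArg List.length heq
    simpa using this.symm
  obtain ⟨a, b, c, rfl⟩ : ∃ a b c, l'' = [a, b, c] := by
    rcases l'' with _ | ⟨a, _ | ⟨b, _ | ⟨c, _ | ⟨e, r⟩⟩⟩⟩ <;> simp at hlen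
    exact ⟨a, b, c, rfl⟩
  simp only [List.map_cons, List.map_nil, List.cons.injEq, and_true] at heq
  obtain ⟨rfl, rfl, rfl⟩ := heq
  obtain ⟨s, t, hst, hslb, htla⟩ := List.sublist_append_iff.mp hsub'
  have trivial_c : c = y → min (G.dist y a) (G.dist y c) ≤ G.dist y b := by
    intro hcy
    subst hcy
    simp [SimpleGraph.dist_self]
  rcases s with _ | ⟨a', s⟩
  · -- all three in la
    simp only [List.nil_append] at hst
    subst hst
    have hmem : ∀ z ∈ [a, b, c], z ∈ la := fun z hz => htla.subset hz
    have hp : ([a, b, c]).Pairwise (fun p q => f p < f q) := hpla.sublist htla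
    by_cases hcy : c = y
    · exact trivial_c hcy
    · have hcylt : f c < f y := lt_of_le_of_ne (hla c (hmem c (by simp)))
        (fun h => hcy (hinj h))
      simp only [List.pairwise_cons, List.mem_cons, List.mem_singleton,
        List.not_mem_nil] at hp
      exact claimC hinj hNC hcon (hdla a (hmem a (by simp))) (hdla b (hmem b (by simp)))
        (hdla c (hmem c (by simp)))
        (Or.inr (Or.inl ⟨by tauto, by tauto, hcylt⟩))
  rcases s with _ | ⟨b', s⟩
  · -- a in lb; b, c in la
    obtain ⟨rfl, ht⟩ : a = a' ∧ [b, c] = t := by simpa using hst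
    subst ht
    have halb : a ∈ lb := hslb.subset (by simp)
    have hbla : b ∈ la := htla.subset (by simp)
    have hcla : c ∈ la := htla.subset (by simp)
    have hp : ([b, c]).Pairwise (fun p q => f p < f q) := hpla.sublist htla
    by_cases hcy : c = y
    · exact trivial_c hcy
    · have hcylt : f c < f y := lt_of_le_of_ne (hla c hcla) (fun h => hcy (hinj h))
      simp only [List.pairwise_cons, List.mem_singleton, List.not_mem_nil] at hp
      exact claimC hinj hNC hcon (hdlb a halb) (hdla b hbla) (hdla c hcla)
        (Or.inr (Or.inr (Or.inl ⟨by tauto, hcylt, hlb a halb⟩)))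
  rcases s with _ | ⟨c', s⟩
  · -- a, b in lb; c in la
    obtain ⟨rfl, rfl, ht⟩ : a = a' ∧ b = b' ∧ [c] = t := by simpa using hst
    subst ht
    have halb : a ∈ lb := hslb.subset (by simp)
    have hblb : b ∈ lb := hslb.subset (by simp)
    have hcla : c ∈ la := htla.subset (by simp)
    have hp : ([a, b]).Pairwise (fun p q => f p < f q) := hplb.sublist hslb
    by_cases hcy : c = y
    · exact trivial_c hcy
    · have hcylt : f c < f y := lt_of_le_of_ne (hla c hcla) (fun h => hcy (hinj h))
      simp only [List.pairwise_cons, List.mem_singleton, List.not_mem_nil] at hp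
      exact claimC hinj hNC hcon (hdlb a halb) (hdlb b hblb) (hdla c hcla)
        (Or.inr (Or.inr (Or.inr ⟨hcylt, hlb a halb, by tauto⟩)))
  · -- all three in lb
    obtain ⟨rfl, rfl, rfl, hs, ht⟩ : a = a' ∧ b = b' ∧ c = c' ∧ s = [] ∧ t = [] := by
      have : [a, b, c] = a' :: b' :: c' :: (s ++ t) := by simpa using hst
      simp only [List.cons.injEq] at this
      obtain ⟨h1, h2, h3, h4⟩ := this
      obtain ⟨hs, ht⟩ := List.append_eq_nil_iff.mp h4.symm
      exact ⟨h1, h2, h3, hs, ht⟩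
    subst hs
    have hmem : ∀ z ∈ [a, b, c], z ∈ lb := fun z hz => hslb.subset hz
    have hp : ([a, b, c]).Pairwise (fun p q => f p < f q) := hplb.sublist hslb
    simp only [List.pairwise_cons, List.mem_cons, List.mem_singleton,
      List.not_mem_nil] at hp
    exact claimC hinj hNC hcon (hdlb a (hmem a (by simp))) (hdlb b (hmem b (by simp)))
      (hdlb c (hmem c (by simp)))
      (Or.inl ⟨hlb a (hmem a (by simp)), by tauto, by tauto⟩)

lemma mem_dropWhile_gt {y : V} (hinj : Function.Injective f) :
    ∀ (l : List V), l.Pairwise (fun p q => f p < f q) →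
      ∀ z ∈ l.dropWhile (fun z => decide (f z ≤ f y)), f y < f z
  | [], _, z, hz => by simp at hz
  | a :: t, hp, z, hz => by
    by_cases ha : f a ≤ f y
    · rw [List.dropWhile_cons_of_pos (by simpa using ha)] at hz
      exact mem_dropWhile_gt hinj t (List.pairwise_cons.mp hp).2 z hz
    · rw [List.dropWhile_cons_of_neg (by simpa using ha)] at hz
      push_neg at ha
      rcases List.mem_cons.mp hz with rfl | hz'
      · exact ha
      · exact ha.trans ((List.pairwise_cons.mp hp).1 z hz')

lemma changes_coord_le [DecidableEq V] (hinj : Function.Injective f)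
    (hNC : ∀ a b c d : V, f a < f c → f c < f b → f b < f d → G.Adj a b → ¬ G.Adj c d)
    (hcon : G.Connected) {x1 : V} {d i : ℕ} (hdist : ∀ p q : V, G.dist p q ≤ d)
    {l : List V} (hp : l.Pairwise (fun p q => f p < f q))
    (hdl : ∀ z ∈ l, G.dist x1 z = i) (y : V) :
    changes (l.map (fun z => G.dist y z)) ≤ 2 * d := by
  set P := fun z : V => decide (f z ≤ f y) with hP
  have hsplit : l.takeWhile P ++ l.dropWhile P = l := List.takeWhile_append_dropWhile
  have htw : l.takeWhile P <+ l := List.takeWhile_sublist _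
  have hdw : l.dropWhile P <+ l := List.dropWhile_sublist _
  have hmain : changes ((l.takeWhile P).map (fun z => G.dist y z) ++
      (l.dropWhile P).map (fun z => G.dist y z)) ≤ 2 * d := by
    apply rot_bound
    · rw [← List.map_append]
      apply concave_rotated hinj hNC hcon (x1 := x1) (i := i)
      · intro z hz
        have := List.mem_takeWhile_imp hz
        simpa [hP] using this
      · exact fun z hz => mem_dropWhile_gt hinj l hp z hz
      · exact hp.sublist htw
      · exact hp.sublist hdw
      · exact fun z hz => hdl z (htw.subset hz)
      · exact fun z hz => hdl z (hdw.subset hz)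
    · intro x hx
      rw [← List.map_append] at hx
      obtain ⟨z, _, rfl⟩ := List.mem_map.mp hx
      exact hdist y z
  rw [← List.map_append, hsplit] at hmain
  exact hmain

lemma len_le {S : Finset V} :
    ∀ l : List V, (∀ a b : V, [a, b] <+ l → ∃ y ∈ S, G.dist y a ≠ G.dist y b) →
      l.length ≤ 1 + ∑ y ∈ S, changes (l.map (fun z => G.dist y z))
  | [], _ => by simp
  | [a], _ => by simp
  | a :: b :: t, h => by
    obtain ⟨y0, hy0, hne⟩ := h a b (.cons₂ _ (.cons₂ _ (List.nil_sublist t)))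
    have ih := len_le (b :: t)
      (fun p q hs => h p q (hs.trans ((b :: t).sublist_cons_self a)))
    have hpoint : ∀ y ∈ S, changes ((b :: t).map (fun z => G.dist y z)) ≤
        changes ((a :: b :: t).map (fun z => G.dist y z)) := by
      intro y _
      exact changes_cons_le _ _
    have hstrict : changes ((b :: t).map (fun z => G.dist y0 z)) <
        changes ((a :: b :: t).map (fun z => G.dist y0 z)) := by
      show _ < (if G.dist y0 a = G.dist y0 b then 0 else 1) +
        changes ((b :: t).map (fun z => G.dist y0 z))
      rw [if_neg hne]
      omega
    have hsum := Finset.sum_lt_sum hpoint ⟨y0, hy0, hstrict⟩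
    have hlen : (a :: b :: t).length = (b :: t).length + 1 := by simp
    omega

lemma level_bound [Fintype V] [DecidableEq V] (hinj : Function.Injective f)
    (hNC : ∀ a b c d : V, f a < f c → f c < f b → f b < f d → G.Adj a b → ¬ G.Adj c d)
    (hcon : G.Connected) {d : ℕ} (hdist : ∀ p q : V, G.dist p q ≤ d)
    {R : Finset V} (hR : ∀ u v : V, u ≠ v → ∃ x ∈ R, G.dist x u ≠ G.dist x v)
    {x1 : V} (hx1 : x1 ∈ R) (i : ℕ) :
    (Finset.univ.filter (fun v => G.dist x1 v = i)).card ≤ 1 + 2 * d * (R.card - 1) := by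
  letI : DecidableRel (fun p q : V => f p ≤ f q) :=
    fun p q => inferInstanceAs (Decidable (f p ≤ f q))
  haveI : IsTrans V (fun p q : V => f p ≤ f q) := ⟨fun a b c h1 h2 => le_trans h1 h2⟩
  haveI : IsAntisymm V (fun p q : V => f p ≤ f q) :=
    ⟨fun a b h1 h2 => hinj (le_antisymm h1 h2)⟩
  haveI : IsTotal V (fun p q : V => f p ≤ f q) := ⟨fun a b => le_total _ _⟩
  set L := Finset.univ.filter (fun v => G.dist x1 v = i) with hL
  set l := L.sort (fun p q : V => f p ≤ f q) with hl
  have hlen : l.length = L.card := Finset.length_sort _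
  have hsorted : l.Pairwise (fun p q => f p < f q) := by
    have h1 : l.Pairwise (fun p q : V => f p ≤ f q) := Finset.pairwise_sort _ _
    have h2 : l.Nodup := Finset.sort_nodup _ _
    exact (h1.and h2).imp (fun hpq => lt_of_le_of_ne hpq.1 (fun he => hpq.2 (hinj he)))
  have hmem : ∀ z ∈ l, G.dist x1 z = i := by
    intro z hz
    have := (Finset.mem_sort (α := V) (fun p q : V => f p ≤ f q)).mp hz
    exact (Finset.mem_filter.mp this).2
  have hS : ∀ a b : V, [a, b] <+ l → ∃ x ∈ R.erase x1, G.dist x a ≠ G.dist x b := by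
    intro a b hs
    have hab : f a < f b := by
      have := hsorted.sublist hs
      simpa using this
    have hne : a ≠ b := fun h => by subst h; omega
    obtain ⟨x, hxR, hxne⟩ := hR a b hne
    refine ⟨x, Finset.mem_erase.mpr ⟨?_, hxR⟩, hxne⟩
    intro hxx1
    subst hxx1
    rw [hmem a (hs.subset (by simp)), hmem b (hs.subset (by simp))] at hxne
    exact hxne rfl
  have h1 := len_le l hS
  have h2 : ∑ y ∈ R.erase x1, changes (l.map (fun z => G.dist y z)) ≤
      ∑ y ∈ R.erase x1, 2 * d := by
    apply Finset.sum_le_sum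
    intro y _
    exact changes_coord_le hinj hNC hcon hdist hsorted hmem y
  have h3 : ∑ y ∈ R.erase x1, 2 * d = (R.card - 1) * (2 * d) := by
    rw [Finset.sum_const, Finset.card_erase_of_mem hx1, smul_eq_mul]
  have := hlen
  have hfin : L.card ≤ 1 + (R.card - 1) * (2 * d) := by omega
  calc L.card ≤ 1 + (R.card - 1) * (2 * d) := hfin
    _ = 1 + 2 * d * (R.card - 1) := by ring

end Graph

theorem main_aux {V : Type*} [Fintype V] (G : SimpleGraph V) (hG : G.Connected)
    (f : V → ℕ) (hinj : Function.Injective f)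
    (hNC : ∀ a b c d : V, f a < f c → f c < f b → f b < f d → G.Adj a b → ¬ G.Adj c d)
    (d k : ℕ) (hd : G.diam = d)
    (R : Finset V) (hR : ∀ u v : V, u ≠ v → ∃ x ∈ R, G.dist x u ≠ G.dist x v)
    (hk : R.card = k) :
    Fintype.card V ≤ 2 * k * d ^ 2 - 2 * d ^ 2 + d + 1 := by
  classical
  rcases Nat.eq_zero_or_pos k with rfl | hkpos
  · have hRempty : R = ∅ := Finset.card_eq_zero.mp hk
    have hsub : ∀ u v : V, u = v := by
      intro u v
      by_contra hne
      obtain ⟨x, hx, _⟩ := hR u v hne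
      rw [hRempty] at hx
      exact absurd hx (Finset.notMem_empty x)
    have hcard : Fintype.card V ≤ 1 := Fintype.card_le_one_iff.mpr hsub
    have : 2 * 0 * d ^ 2 = 0 := by ring
    omega
  · obtain ⟨x1, hx1⟩ := Finset.card_pos.mp (by omega : 0 < R.card)
    haveI : Nonempty V := hG.nonempty
    have hediam : G.ediam ≠ ⊤ := by
      obtain ⟨u, v, huv⟩ := SimpleGraph.exists_edist_eq_ediam_of_finite (G := G)
      rw [← huv]
      exact SimpleGraph.edist_ne_top_iff_reachable.mpr (hG u v)
    have hdist : ∀ p q : V, G.dist p q ≤ d := by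
      intro p q
      rw [← hd]
      exact SimpleGraph.dist_le_diam hediam
    have hfiber := Finset.card_eq_sum_card_fiberwise
      (f := fun v : V => G.dist x1 v) (s := Finset.univ) (t := Finset.range (d + 1))
      (fun x _ => Finset.mem_range.mpr (by simpa using Nat.lt_succ_of_le (hdist x1 x)))
    have hcardV : Fintype.card V =
        ∑ i ∈ Finset.range (d + 1),
          (Finset.univ.filter (fun v => G.dist x1 v = i)).card := by
      rw [← hfiber]
      rfl
    have hsplit : ∑ i ∈ Finset.range (d + 1),
        (Finset.univ.filter (fun v => G.dist x1 v = i)).card =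
        (∑ i ∈ Finset.range d,
          (Finset.univ.filter (fun v => G.dist x1 v = i + 1)).card) +
        (Finset.univ.filter (fun v => G.dist x1 v = 0)).card :=
      Finset.sum_range_succ' _ d
    have hzero : (Finset.univ.filter (fun v => G.dist x1 v = 0)).card ≤ 1 := by
      have hsub0 : Finset.univ.filter (fun v => G.dist x1 v = 0) ⊆ {x1} := by
        intro v hv
        have := (Finset.mem_filter.mp hv).2
        have := (hG.dist_eq_zero_iff (u := x1) (v := v)).mp this
        simp [← this]
      calc _ ≤ ({x1} : Finset V).card := Finset.card_le_card hsub0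
        _ = 1 := Finset.card_singleton _
    have hlev : ∀ j ∈ Finset.range d,
        (Finset.univ.filter (fun v => G.dist x1 v = j + 1)).card ≤
          1 + 2 * d * (R.card - 1) := by
      intro j _
      exact level_bound hinj hNC hG hdist hR hx1 (j + 1)
    have hsum : ∑ i ∈ Finset.range d,
        (Finset.univ.filter (fun v => G.dist x1 v = i + 1)).card ≤
        d * (1 + 2 * d * (R.card - 1)) := by
      calc _ ≤ ∑ _i ∈ Finset.range d, (1 + 2 * d * (R.card - 1)) :=
            Finset.sum_le_sum hlev
        _ = d * (1 + 2 * d * (R.card - 1)) := by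
            rw [Finset.sum_const, Finset.card_range, smul_eq_mul]
    obtain ⟨k', rfl⟩ : ∃ k', k = k' + 1 := ⟨k - 1, by omega⟩
    have hck : R.card - 1 = k' := by omega
    rw [hck] at hsum
    have harith : d * (1 + 2 * d * k') + 1 = 2 * (k' + 1) * d ^ 2 - 2 * d ^ 2 + d + 1 := by
      have h2 : 2 * (k' + 1) * d ^ 2 - 2 * d ^ 2 = 2 * k' * d ^ 2 := by
        have he : 2 * (k' + 1) * d ^ 2 = 2 * k' * d ^ 2 + 2 * d ^ 2 := by ring
        rw [he, Nat.add_sub_cancel]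
      rw [h2]
      ring
    omega

end OuterRes


/-- A set `R` of vertices of a graph `G` is a resolving set. -/
def SimpleGraph.IsResolvingSet {V : Type*} (G : SimpleGraph V) (R : Set V) : Prop :=
  ∀ u v : V, u ≠ v → ∃ x ∈ R, G.dist x u ≠ G.dist x v

/-- A graph is outerplanar iff it admits a crossing-free drawing with all vertices on a
circle: there is an injective placement of the vertices on a line (the circle cut at a
point) such that no two edges `{a,b}`, `{c,d}` interleave as `a < c < b < d`. -/
def SimpleGraph.IsOuterplanar {V : Type*} (G : SimpleGraph V) : Prop :=
  ∃ f : V → ℕ, Function.Injective f ∧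
    ∀ a b c d : V, f a < f c → f c < f b → f b < f d → G.Adj a b → ¬ G.Adj c d

/-- If `G` is an outerplanar graph with diameter `d` and a resolving set of size `k`, then
`G` has order at most `2kd² − 2d² + d + 1`. -/
theorem statement18 {V : Type*} [Fintype V] (G : SimpleGraph V) (hG : G.Connected)
    (houter : G.IsOuterplanar) (d k : ℕ) (hd : G.diam = d)
    (R : Finset V) (hR : G.IsResolvingSet ↑R) (hk : R.card = k) :
    Fintype.card V ≤ 2 * k * d ^ 2 - 2 * d ^ 2 + d + 1 := by
  obtain ⟨f, hinj, hNC⟩ := houter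
  have hR' : ∀ u v : V, u ≠ v → ∃ x ∈ R, G.dist x u ≠ G.dist x v := by
    intro u v huv
    obtain ⟨x, hx, hne⟩ := hR u v huv
    exact ⟨x, hx, hne⟩
  exact OuterRes.main_aux G hG f hinj hNC d k hd R hR' hk
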